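/- Let F : ℝ^d → ℝ be differentiable with L-Lipschitz gradient ∇F. Let γ > 0, let x ∈ ℝ^d with ∇F(x) ≠ 0, let ĝ ∈ ℝ^d with ĝ ≠ 0, let Z ∈ {0,1}, set x₊ = x − γ ĝ/‖ĝ‖, and let e = ∇F(x)/‖∇F(x)‖ − ĝ/‖ĝ‖. Then F(x₊) − F(x) ≤ −γ(1 − 2Z) ‖∇F(x)‖ + γ(1−Z) ‖∇F(x)‖ ‖e‖ + Lγ²/2. -/

import Mathlib

open intervalIntegral in
/-- Descent lemma: for `L`-smooth `F`,
`F y - F x ≤ ⟪G x, y - x⟫ + L/2 ‖y - x‖²`. -/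
lemma descent_lemma_aux {d : ℕ}
    (F : EuclideanSpace ℝ (Fin d) → ℝ)
    (G : EuclideanSpace ℝ (Fin d) → EuclideanSpace ℝ (Fin d))
    (hF : ∀ y, HasGradientAt F (G y) y)
    (L : ℝ) (hL : 0 ≤ L)
    (hsmooth : ∀ y z, ‖G y - G z‖ ≤ L * ‖y - z‖)
    (x y : EuclideanSpace ℝ (Fin d)) :
    F y - F x ≤ inner ℝ (G x) (y - x) + L / 2 * ‖y - x‖ ^ 2 := by
  set v := y - x with hv
  -- G is continuous
  have hGcont : Continuous G := by
    rcases eq_or_lt_of_le hL with h0 | h0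
    · have : ∀ a b, G a = G b := by
        intro a b
        have := hsmooth a b
        rw [← h0, zero_mul] at this
        have : ‖G a - G b‖ = 0 := le_antisymm this (norm_nonneg _)
        rwa [norm_sub_eq_zero_iff] at this
      exact continuous_const.congr fun a => this x a
    · exact (LipschitzWith.of_dist_le_mul (K := ⟨L, hL⟩) (fun a b => by
        rw [dist_eq_norm, dist_eq_norm]; exact hsmooth a b)).continuous
  have hline : Continuous fun t : ℝ => x + t • v := by fun_prop
  set φ' : ℝ → ℝ := fun t => inner ℝ (G (x + t • v)) v with hφ'
  have hφ'cont : Continuous φ' := by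
    apply Continuous.inner (hGcont.comp hline) continuous_const
  have hderiv : ∀ t ∈ Set.uIcc (0:ℝ) 1,
      HasDerivAt (fun t : ℝ => F (x + t • v)) (φ' t) t := by
    intro t _
    have h1 : HasDerivAt (fun t : ℝ => x + t • v) v t := by
      simpa using ((hasDerivAt_id t).smul_const v).const_add x
    have h2 := (hF (x + t • v)).hasFDerivAt
    have := h2.comp_hasDerivAt t h1
    simp [φ', InnerProductSpace.toDual_apply_apply] at this; exact this
  have hFTC : F y - F x = ∫ t in (0:ℝ)..1, φ' t := by
    have := integral_eq_sub_of_hasDerivAt hderiv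
      (hφ'cont.intervalIntegrable 0 1)
    rw [show F y = F (x + (1:ℝ) • v) by simp [hv], this]
    simp
  rw [hFTC]
  have hbound : ∀ t ∈ Set.Icc (0:ℝ) 1,
      φ' t ≤ inner ℝ (G x) v + L * t * ‖v‖ ^ 2 := by
    intro t ht
    have : φ' t - inner ℝ (G x) v = inner ℝ (G (x + t • v) - G x) v := by
      simp [φ', inner_sub_left]
    have hcs : inner ℝ (G (x + t • v) - G x) v ≤ ‖G (x + t • v) - G x‖ * ‖v‖ :=
      real_inner_le_norm _ _
    have hlip : ‖G (x + t • v) - G x‖ ≤ L * (t * ‖v‖) := by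
      have := hsmooth (x + t • v) x
      simpa [norm_smul, abs_of_nonneg ht.1] using this
    nlinarith [norm_nonneg v, mul_le_mul_of_nonneg_right hlip (norm_nonneg v)]
  have hc : Continuous fun t : ℝ => (inner ℝ (G x) v : ℝ) + L * ‖v‖ ^ 2 * t := by
    fun_prop
  calc ∫ t in (0:ℝ)..1, φ' t
      ≤ ∫ t in (0:ℝ)..1, ((inner ℝ (G x) v : ℝ) + L * ‖v‖ ^ 2 * t) := by
        apply intervalIntegral.integral_mono_on (by norm_num)
          (hφ'cont.intervalIntegrable 0 1) (hc.intervalIntegrable 0 1)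
        intro t ht
        have := hbound t ht
        linarith [this, (by ring : L * t * ‖v‖ ^ 2 = L * ‖v‖ ^ 2 * t)]
    _ = inner ℝ (G x) v + L / 2 * ‖v‖ ^ 2 := by
        have hint : IntervalIntegrable (fun t : ℝ => L * ‖v‖ ^ 2 * t)
            MeasureTheory.volume 0 1 :=
          (by fun_prop : Continuous fun t : ℝ => L * ‖v‖ ^ 2 * t).intervalIntegrable 0 1
        rw [intervalIntegral.integral_add intervalIntegrable_const hint,
          intervalIntegral.integral_const,
          intervalIntegral.integral_const_mul, integral_id]
        simp only [smul_eq_mul]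
        ring

/-- Per-iteration descent inequality of the normalized update (key inequality in the
proof of Theorem 2 of the paper): for `x₊ = x - γ ĝ/‖ĝ‖`,
`F(x₊) - F(x) ≤ -γ(1-2Z)‖∇F(x)‖ + γ(1-Z)‖∇F(x)‖‖e‖ + Lγ²/2`. -/
theorem normalized_update_descent_inequality
    {d : ℕ}
    (F : EuclideanSpace ℝ (Fin d) → ℝ)
    (G : EuclideanSpace ℝ (Fin d) → EuclideanSpace ℝ (Fin d))
    (hF : ∀ y, HasGradientAt F (G y) y)
    (L : ℝ) (hL : 0 ≤ L)
    (hsmooth : ∀ y z, ‖G y - G z‖ ≤ L * ‖y - z‖)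
    (γ : ℝ) (hγ : 0 < γ)
    (x : EuclideanSpace ℝ (Fin d)) (hGx : G x ≠ 0)
    (g : EuclideanSpace ℝ (Fin d)) (hg : g ≠ 0)
    (Z : ℝ) (hZ : Z = 0 ∨ Z = 1)
    (xplus : EuclideanSpace ℝ (Fin d)) (hxplus : xplus = x - γ • ‖g‖⁻¹ • g)
    (e : EuclideanSpace ℝ (Fin d)) (he : e = ‖G x‖⁻¹ • G x - ‖g‖⁻¹ • g) :
    F xplus - F x ≤ -γ * (1 - 2 * Z) * ‖G x‖ + γ * (1 - Z) * ‖G x‖ * ‖e‖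
        + L * γ ^ 2 / 2 := by
  set u : EuclideanSpace ℝ (Fin d) := ‖g‖⁻¹ • g with hu
  have hnu : ‖u‖ = 1 := by
    rw [hu, norm_smul, norm_inv, norm_norm, inv_mul_cancel₀ (norm_ne_zero_iff.2 hg)]
  have hvx : xplus - x = -γ • u := by
    rw [hxplus]; module
  have hnvx : ‖xplus - x‖ = γ := by
    rw [hvx, norm_smul, hnu, mul_one, norm_neg, Real.norm_of_nonneg hγ.le]
  have hdesc := descent_lemma_aux F G hF L hL hsmooth x xplus
  rw [hnvx, hvx] at hdesc
  have hinner : (inner ℝ (G x) ((-γ) • u) : ℝ) = -γ * inner ℝ (G x) u := by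
    rw [real_inner_smul_right]
  rw [hinner] at hdesc
  have hcs : |(inner ℝ (G x) u : ℝ)| ≤ ‖G x‖ := by
    calc |(inner ℝ (G x) u : ℝ)| ≤ ‖G x‖ * ‖u‖ := abs_real_inner_le_norm _ _
      _ = ‖G x‖ := by rw [hnu, mul_one]
  rcases hZ with hZ | hZ
  · -- Z = 0 : use u = G x/‖G x‖ - e
    subst hZ
    have hue : u = ‖G x‖⁻¹ • G x - e := by rw [he, hu]; module
    have h1 : (inner ℝ (G x) u : ℝ) = ‖G x‖ - inner ℝ (G x) e := by
      rw [hue, inner_sub_right, real_inner_smul_right, real_inner_self_eq_norm_sq]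
      have hn : ‖G x‖ ≠ 0 := norm_ne_zero_iff.2 hGx
      have : ‖G x‖⁻¹ * ‖G x‖ ^ 2 = ‖G x‖ := by
        rw [sq, ← mul_assoc, inv_mul_cancel₀ hn, one_mul]
      rw [this]
    have h2 : (inner ℝ (G x) e : ℝ) ≤ ‖G x‖ * ‖e‖ := real_inner_le_norm _ _
    have hGpos : (0:ℝ) ≤ ‖G x‖ := norm_nonneg _
    nlinarith [hdesc]
  · -- Z = 1 : Cauchy-Schwarz
    subst hZ
    have h3 : -γ * (inner ℝ (G x) u : ℝ) ≤ γ * ‖G x‖ := by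
      have := neg_abs_le (inner ℝ (G x) u : ℝ)
      nlinarith [hcs, abs_nonneg (inner ℝ (G x) u : ℝ)]
    nlinarith [hdesc, norm_nonneg e, norm_nonneg (G x)]
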